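/- Every n-uniform hypergraph F with an even number of vertices and maximum degree at most 2^(n-2)/(e·n) admits a proper halving 2-coloring: a red/blue coloring of its vertices in which no hyperedge is monochromatic and the numbers of red and blue vertices are equal. -/

import Mathlib

open Finset

variable {κ : Type} [Fintype κ] [DecidableEq κ]

/-- Events determined by disjoint coordinate sets are independent (counting form). -/
lemma indep_card (s : Finset κ)
    (f g : (κ → Bool) → Prop) [DecidablePred f] [DecidablePred g]
    (hf : ∀ ω ω' : κ → Bool, (∀ i ∈ s, ω i = ω' i) → (f ω ↔ f ω'))
    (hg : ∀ ω ω' : κ → Bool, (∀ i ∉ s, ω i = ω' i) → (g ω ↔ g ω')) :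
    (univ.filter fun ω => f ω ∧ g ω).card * Fintype.card (κ → Bool)
      = (univ.filter f).card * (univ.filter g).card := by
  rw [← Finset.card_univ (α := κ → Bool), ← Finset.card_product, ← Finset.card_product]
  refine Finset.card_bij'
    (fun p _ => (s.piecewise p.1 p.2, s.piecewise p.2 p.1))
    (fun p _ => (s.piecewise p.1 p.2, s.piecewise p.2 p.1)) ?_ ?_ ?_ ?_
  · rintro ⟨ω, τ⟩ hp
    simp only [Finset.mem_product, Finset.mem_filter, Finset.mem_univ, true_and] at hp ⊢
    obtain ⟨⟨hfω, hgω⟩, -⟩ := hp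
    constructor
    · exact (hf _ ω (fun i hi => s.piecewise_eq_of_mem _ _ hi)).mpr hfω
    · exact (hg _ ω (fun i hi => s.piecewise_eq_of_notMem _ _ hi)).mpr hgω
  · rintro ⟨α, β⟩ hp
    simp only [Finset.mem_product, Finset.mem_filter, Finset.mem_univ, true_and, and_true] at hp ⊢
    obtain ⟨hfα, hgβ⟩ := hp
    constructor
    · exact (hf _ α (fun i hi => s.piecewise_eq_of_mem _ _ hi)).mpr hfα
    · exact (hg _ β (fun i hi => s.piecewise_eq_of_notMem _ _ hi)).mpr hgβ
  · rintro ⟨ω, τ⟩ -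
    have h1 : s.piecewise (s.piecewise ω τ) (s.piecewise τ ω) = ω := by
      funext i
      by_cases hi : i ∈ s <;>
        simp [Finset.piecewise_eq_of_mem _ _ _ , Finset.piecewise_eq_of_notMem, hi,
          Finset.piecewise]
    have h2 : s.piecewise (s.piecewise τ ω) (s.piecewise ω τ) = τ := by
      funext i
      by_cases hi : i ∈ s <;> simp [hi, Finset.piecewise]
    simp [h1, h2]
  · rintro ⟨α, β⟩ -
    have h1 : s.piecewise (s.piecewise α β) (s.piecewise β α) = α := by
      funext i; by_cases hi : i ∈ s <;> simp [hi, Finset.piecewise]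
    have h2 : s.piecewise (s.piecewise β α) (s.piecewise α β) = β := by
      funext i; by_cases hi : i ∈ s <;> simp [hi, Finset.piecewise]
    simp [h1, h2]

/-- Single coordinate count. -/
lemma card_coord (i₀ : κ) (b : Bool) :
    (univ.filter fun ω : κ → Bool => ω i₀ = b).card * 2 = Fintype.card (κ → Bool) := by
  have hbij : (univ.filter fun ω : κ → Bool => ω i₀ = b).card
      = (univ.filter fun ω : κ → Bool => ω i₀ = !b).card := by
    refine Finset.card_bij' (fun ω _ => Function.update ω i₀ (!b))
      (fun ω _ => Function.update ω i₀ b) ?_ ?_ ?_ ?_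
    · intro ω _; simp
    · intro ω _; simp
    · intro ω hω
      simp only [Finset.mem_filter, Finset.mem_univ, true_and] at hω
      funext i
      by_cases hi : i = i₀
      · subst hi; simp [hω]
      · simp [Function.update_of_ne hi]
    · intro ω hω
      simp only [Finset.mem_filter, Finset.mem_univ, true_and] at hω
      funext i
      by_cases hi : i = i₀
      · subst hi; simp [hω]
      · simp [Function.update_of_ne hi]
  have hdisj : Disjoint (univ.filter fun ω : κ → Bool => ω i₀ = b)
      (univ.filter fun ω : κ → Bool => ω i₀ = !b) := by
    rw [Finset.disjoint_left]
    intro ω h1 h2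
    simp only [Finset.mem_filter, Finset.mem_univ, true_and] at h1 h2
    rw [h1] at h2; cases b <;> simp at h2
  have hcover : (univ.filter fun ω : κ → Bool => ω i₀ = b)
      ∪ (univ.filter fun ω : κ → Bool => ω i₀ = !b) = univ := by
    ext ω
    simp only [Finset.mem_union, Finset.mem_filter, Finset.mem_univ, true_and, iff_true]
    cases h : ω i₀ <;> cases b <;> simp
  have hpart : (univ.filter fun ω : κ → Bool => ω i₀ = b).card
      + (univ.filter fun ω : κ → Bool => ω i₀ = !b).card = Fintype.card (κ → Bool) := by
    rw [← Finset.card_union_of_disjoint hdisj, hcover, Finset.card_univ]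
  rw [mul_two]
  nth_rewrite 2 [hbij]
  exact hpart
open Finset

variable {κ : Type} [Fintype κ] [DecidableEq κ]

lemma card_forall_eq {V' : Type} [DecidableEq V'] (π : V' → κ) (σ : V' → Bool)
    (e : Finset V') (hinj : Set.InjOn π e) :
    (univ.filter fun ω : κ → Bool => ∀ v ∈ e, ω (π v) = σ v).card * 2 ^ e.card
      = Fintype.card (κ → Bool) := by
  classical
  induction e using Finset.induction_on with
  | empty => simp [Finset.filter_true_of_mem]
  | @insert a e ha ih =>
    have hinj' : Set.InjOn π e := hinj.mono (by simp [Finset.subset_insert, Finset.coe_subset])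
    have hne : ∀ v ∈ e, π v ≠ π a := by
      intro v hv h
      exact ha (by
        have : v = a := hinj (by simp [hv]) (by simp) h
        rwa [← this])
    have key := indep_card (s := ({π a} : Finset κ))
      (f := fun ω => ω (π a) = σ a) (g := fun ω => ∀ v ∈ e, ω (π v) = σ v)
      (by intro ω ω' hagree
          have h := hagree (π a) (by simp)
          simp only [h])
      (by intro ω ω' hagree
          constructor <;> intro h v hv
          · rw [← hagree (π v) (by simp [hne v hv])]; exact h v hv
          · rw [hagree (π v) (by simp [hne v hv])]; exact h v hv)
    have hfilter : (univ.filter fun ω : κ → Bool => ∀ v ∈ insert a e, ω (π v) = σ v)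
        = (univ.filter fun ω : κ → Bool => ω (π a) = σ a ∧ ∀ v ∈ e, ω (π v) = σ v) := by
      apply Finset.filter_congr
      intro ω _
      simp [Finset.forall_mem_insert]
    have hcoord := card_coord (π a) (σ a)
    have hIH := ih hinj'
    rw [hfilter, Finset.card_insert_of_notMem ha]
    -- arithmetic
    set C := (univ.filter fun ω : κ → Bool => ω (π a) = σ a ∧ ∀ v ∈ e, ω (π v) = σ v).card
    set F := (univ.filter fun ω : κ → Bool => ω (π a) = σ a).card
    set G := (univ.filter fun ω : κ → Bool => ∀ v ∈ e, ω (π v) = σ v).card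
    set N := Fintype.card (κ → Bool) with hN
    have hNpos : 0 < N := Fintype.card_pos
    have : C * 2 ^ (e.card + 1) * N = N * N := by
      calc C * 2 ^ (e.card + 1) * N = (C * N) * 2 ^ e.card * 2 := by ring
        _ = (F * G) * 2 ^ e.card * 2 := by rw [key]
        _ = (F * 2) * (G * 2 ^ e.card) := by ring
        _ = N * N := by rw [hcoord, hIH]
    exact Nat.eq_of_mul_eq_mul_right hNpos this
section LLL
open Finset
variable {Ω ι : Type} [Fintype Ω] [DecidableEq Ω] [Fintype ι] [DecidableEq ι]
set_option linter.unusedSectionVars false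

/-- intersection of complements of events indexed by `S` -/
def Bset (A : ι → Finset Ω) (S : Finset ι) : Finset Ω :=
  univ.filter fun ω => ∀ j ∈ S, ω ∉ A j

lemma Bset_insert (A : ι → Finset Ω) (j : ι) (S : Finset ι) :
    Bset A (insert j S) = Bset A S \ A j := by
  ext ω
  simp only [Bset, Finset.mem_filter, Finset.mem_univ, true_and, Finset.mem_sdiff,
    Finset.forall_mem_insert]
  tauto

lemma Bset_mono (A : ι → Finset Ω) {S T : Finset ι} (h : S ⊆ T) :
    Bset A T ⊆ Bset A S := by
  intro ω hω
  simp only [Bset, Finset.mem_filter, Finset.mem_univ, true_and] at hω ⊢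
  exact fun j hj => hω j (h hj)

lemma card_sdiff_real (s t : Finset Ω) :
    ((s \ t).card : ℝ) = (s.card : ℝ) - ((t ∩ s).card : ℝ) := by
  have := Finset.card_inter_add_card_sdiff s t
  have h2 : (s ∩ t) = (t ∩ s) := Finset.inter_comm s t
  rw [h2] at this
  push_cast [← this]
  ring

/-- Main LLL induction. -/
theorem LLL_main [Nonempty Ω] (A : ι → Finset Ω) (Γ : ι → Finset ι) (d : ℕ) (x : ℝ)
    (hx0 : 0 < x) (hx1 : x < 1)
    (hΓcard : ∀ i, ((Γ i).erase i).card ≤ d)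
    (hA : ∀ i, ((A i).card : ℝ) ≤ x * (1 - x) ^ d * Fintype.card Ω)
    (hindep : ∀ i, ∀ S : Finset ι, (∀ j ∈ S, j ∉ Γ i) →
      (((A i ∩ Bset A S).card : ℝ)) * Fintype.card Ω = (A i).card * (Bset A S).card) :
    ∀ (m : ℕ) (S : Finset ι), S.card ≤ m → ∀ i, i ∉ S →
      ((A i ∩ Bset A S).card : ℝ) ≤ x * (Bset A S).card := by
  have hx1' : (0:ℝ) ≤ 1 - x := by linarith
  have hx1'' : 1 - x ≤ 1 := by linarith
  intro m
  induction m with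
  | zero =>
    intro S hS i _
    have : S = ∅ := Finset.card_eq_zero.mp (Nat.le_zero.mp hS)
    subst this
    have hB : Bset A (∅ : Finset ι) = univ := by
      simp [Bset]
    rw [hB]
    rw [Finset.inter_univ, Finset.card_univ]
    calc ((A i).card : ℝ) ≤ x * (1 - x) ^ d * Fintype.card Ω := hA i
      _ ≤ x * 1 * Fintype.card Ω := by
          have h1 : (1 - x) ^ d ≤ 1 := pow_le_one₀ hx1' hx1''
          have hN : (0:ℝ) ≤ Fintype.card Ω := by positivity
          exact mul_le_mul_of_nonneg_right
            (mul_le_mul_of_nonneg_left h1 (le_of_lt hx0)) hN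
      _ = x * Fintype.card Ω := by ring
  | succ m ih =>
    intro S hS i hi
    by_cases hSm : S.card ≤ m
    · exact ih S hSm i hi
    have hScard : S.card = m + 1 := le_antisymm hS (by omega)
    set S1 := S ∩ Γ i with hS1
    set S2 := S \ Γ i with hS2
    have hS1sub : S1 ⊆ S := Finset.inter_subset_left
    have hS2sub : S2 ⊆ S := Finset.sdiff_subset
    have hunion : S1 ∪ S2 = S := by
      rw [hS1, hS2]; exact sup_inf_sdiff S (Γ i)
    -- Step A : lower bound card (Bset A (T ∪ S2)) for T ⊆ S1
    have stepA : ∀ T : Finset ι, T ⊆ S1 →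
        (1 - x) ^ T.card * ((Bset A S2).card : ℝ) ≤ ((Bset A (T ∪ S2)).card : ℝ) := by
      intro T
      induction T using Finset.induction_on with
      | empty => intro _; simp
      | @insert a T ha ihT =>
        intro hTsub
        have haS1 : a ∈ S1 := hTsub (Finset.mem_insert_self a T)
        have hTsub' : T ⊆ S1 := (Finset.subset_insert a T).trans hTsub
        have haS2 : a ∉ S2 := by
          rw [hS2]
          simp only [Finset.mem_sdiff, not_and, not_not]
          intro _
          exact (Finset.mem_inter.mp (hS1 ▸ haS1)).2
        have haT : a ∉ T ∪ S2 := by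
          simp only [Finset.mem_union]
          rintro (h | h)
          exacts [ha h, haS2 h]
        have hcard : (T ∪ S2).card ≤ m := by
          have hsub : T ∪ S2 ⊆ S.erase a := by
            intro y hy
            rw [Finset.mem_erase]
            refine ⟨?_, ?_⟩
            · rintro rfl; exact haT hy
            · rcases Finset.mem_union.mp hy with h | h
              exacts [hS1sub (hTsub' h), hS2sub h]
          calc (T ∪ S2).card ≤ (S.erase a).card := Finset.card_le_card hsub
            _ = S.card - 1 := Finset.card_erase_of_mem (hS1sub haS1)
            _ ≤ m := by omega
        have hkey := ih (T ∪ S2) hcard a haT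
        have hins : insert a T ∪ S2 = insert a (T ∪ S2) := by
          rw [Finset.insert_union]
        rw [hins, Bset_insert, Finset.card_insert_of_notMem ha, card_sdiff_real]
        have hBT := ihT hTsub'
        have hB2nn : (0:ℝ) ≤ ((Bset A S2).card : ℝ) := by positivity
        calc (1 - x) ^ (T.card + 1) * ((Bset A S2).card : ℝ)
            = (1 - x) * ((1 - x) ^ T.card * (Bset A S2).card) := by ring
          _ ≤ (1 - x) * ((Bset A (T ∪ S2)).card : ℝ) := by
              apply mul_le_mul_of_nonneg_left hBT hx1'
          _ = ((Bset A (T ∪ S2)).card : ℝ) - x * ((Bset A (T ∪ S2)).card : ℝ) := by ring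
          _ ≤ ((Bset A (T ∪ S2)).card : ℝ) - ((A a ∩ Bset A (T ∪ S2)).card : ℝ) := by
              linarith [hkey]
    have hlow := stepA S1 (subset_refl S1)
    rw [hunion] at hlow
    -- Step B : independence bound
    have hS2Γ : ∀ j ∈ S2, j ∉ Γ i := by
      intro j hj
      exact (Finset.mem_sdiff.mp (hS2 ▸ hj)).2
    have hind := hindep i S2 hS2Γ
    have hmono : ((A i ∩ Bset A S).card : ℝ) ≤ ((A i ∩ Bset A S2).card : ℝ) := by
      exact_mod_cast Finset.card_le_card (Finset.inter_subset_inter (subset_refl _)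
        (Bset_mono A hS2sub))
    have hS1d : S1.card ≤ d := by
      refine le_trans (Finset.card_le_card ?_) (hΓcard i)
      intro j hj
      rw [Finset.mem_erase]
      rcases Finset.mem_inter.mp (hS1 ▸ hj) with ⟨hjS, hjΓ⟩
      exact ⟨by rintro rfl; exact hi hjS, hjΓ⟩
    have hNpos : (0:ℝ) < Fintype.card Ω := by exact_mod_cast Fintype.card_pos
    have hpow : (1 - x) ^ d ≤ (1 - x) ^ S1.card :=
      pow_le_pow_of_le_one hx1' hx1'' hS1d
    have hB2nn : (0:ℝ) ≤ ((Bset A S2).card : ℝ) := by positivity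
    -- combine
    have key : ((A i ∩ Bset A S).card : ℝ) * Fintype.card Ω
        ≤ x * ((Bset A S).card : ℝ) * Fintype.card Ω := by
      calc ((A i ∩ Bset A S).card : ℝ) * Fintype.card Ω
          ≤ ((A i ∩ Bset A S2).card : ℝ) * Fintype.card Ω := by
            apply mul_le_mul_of_nonneg_right hmono (le_of_lt hNpos)
        _ = ((A i).card : ℝ) * (Bset A S2).card := hind
        _ ≤ (x * (1 - x) ^ d * Fintype.card Ω) * (Bset A S2).card := by
            apply mul_le_mul_of_nonneg_right (hA i) hB2nn
        _ ≤ (x * (1 - x) ^ S1.card * Fintype.card Ω) * (Bset A S2).card := by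
            have : x * (1 - x) ^ d ≤ x * (1 - x) ^ S1.card :=
              mul_le_mul_of_nonneg_left hpow (le_of_lt hx0)
            apply mul_le_mul_of_nonneg_right _ hB2nn
            apply mul_le_mul_of_nonneg_right this (le_of_lt hNpos)
        _ = (x * Fintype.card Ω) * ((1 - x) ^ S1.card * (Bset A S2).card) := by ring
        _ ≤ (x * Fintype.card Ω) * ((Bset A S).card : ℝ) := by
            apply mul_le_mul_of_nonneg_left hlow
            positivity
        _ = x * ((Bset A S).card : ℝ) * Fintype.card Ω := by ring
    exact le_of_mul_le_mul_right key hNpos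
end LLL
section LLL2
open Finset
variable {Ω ι : Type} [Fintype Ω] [DecidableEq Ω] [Fintype ι] [DecidableEq ι]

theorem LLL_avoid [Nonempty Ω] (A : ι → Finset Ω) (Γ : ι → Finset ι) (d : ℕ) (x : ℝ)
    (hx0 : 0 < x) (hx1 : x < 1)
    (hΓcard : ∀ i, ((Γ i).erase i).card ≤ d)
    (hA : ∀ i, ((A i).card : ℝ) ≤ x * (1 - x) ^ d * Fintype.card Ω)
    (hindep : ∀ i, ∀ S : Finset ι, (∀ j ∈ S, j ∉ Γ i) →
      (((A i ∩ Bset A S).card : ℝ)) * Fintype.card Ω = (A i).card * (Bset A S).card) :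
    ∃ ω : Ω, ∀ i, ω ∉ A i := by
  have hx1' : (0:ℝ) ≤ 1 - x := by linarith
  have hNpos : (0:ℝ) < Fintype.card Ω := by exact_mod_cast Fintype.card_pos
  have main := LLL_main A Γ d x hx0 hx1 hΓcard hA hindep
  have hlow : ∀ S : Finset ι, (1 - x) ^ S.card * (Fintype.card Ω : ℝ) ≤ (Bset A S).card := by
    intro S
    induction S using Finset.induction_on with
    | empty =>
      have hB : Bset A (∅ : Finset ι) = univ := by simp [Bset]
      simp [hB, Finset.card_univ]
    | @insert a S ha ihS =>
      have hkey := main S.card S (le_refl _) a ha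
      rw [Bset_insert, Finset.card_insert_of_notMem ha, card_sdiff_real]
      calc (1 - x) ^ (S.card + 1) * (Fintype.card Ω : ℝ)
          = (1 - x) * ((1 - x) ^ S.card * Fintype.card Ω) := by ring
        _ ≤ (1 - x) * ((Bset A S).card : ℝ) := mul_le_mul_of_nonneg_left ihS hx1'
        _ = ((Bset A S).card : ℝ) - x * ((Bset A S).card : ℝ) := by ring
        _ ≤ ((Bset A S).card : ℝ) - ((A a ∩ Bset A S).card : ℝ) := by linarith [hkey]
  have hfin : (0:ℝ) < ((Bset A (univ : Finset ι)).card : ℝ) := by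
    have := hlow (univ : Finset ι)
    have hp : (0:ℝ) < (1 - x) ^ (univ : Finset ι).card * (Fintype.card Ω : ℝ) := by
      have : (0:ℝ) < 1 - x := by linarith
      positivity
    linarith
  have : (Bset A (univ : Finset ι)).Nonempty := by
    rw [← Finset.card_pos]
    exact_mod_cast hfin
  obtain ⟨ω, hω⟩ := this
  refine ⟨ω, fun i => ?_⟩
  simp only [Bset, Finset.mem_filter] at hω
  exact hω.2 i (Finset.mem_univ i)
end LLL2
open Finset in
lemma filter_card_equiv {α β : Type} [Fintype α] [Fintype β] [DecidableEq α] [DecidableEq β]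
    (φ : α ≃ β) (p : β → Prop) [DecidablePred p] :
    (univ.filter fun a => p (φ a)).card = (univ.filter p).card := by
  rw [← Fintype.card_subtype, ← Fintype.card_subtype]
  exact Fintype.card_congr (φ.subtypeEquiv fun a => Iff.rfl)

open Finset in
lemma balance_count (k : ℕ) (ω : Fin k → Bool) (b : Bool) :
    (univ.filter fun q : Fin k × Bool => (decide (ω q.1 = q.2)) = b).card = k := by
  have himg : (univ.filter fun q : Fin k × Bool => (decide (ω q.1 = q.2)) = b)
      = univ.image (fun j : Fin k => (j, if b then ω j else !ω j)) := by
    ext ⟨j, c⟩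
    simp only [Finset.mem_filter, Finset.mem_univ, true_and, Finset.mem_image]
    constructor
    · intro h
      refine ⟨j, ?_⟩
      cases b <;> cases c <;> cases hω : ω j <;> simp_all
    · rintro ⟨j', h⟩
      rw [Prod.mk.injEq] at h
      obtain ⟨rfl, rfl⟩ := h
      cases b <;> cases hω : ω j' <;> simp_all
  rw [himg, Finset.card_image_of_injective _ (fun a a' h => by
    rw [Prod.mk.injEq] at h; exact h.1), Finset.card_univ, Fintype.card_fin]

lemma one_div_e_le (m : ℕ) (hm : 1 ≤ m) :
    1 / Real.exp 1 ≤ ((m : ℝ) / (m + 1)) ^ m := by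
  have hm0 : (0:ℝ) < m := by exact_mod_cast hm
  have h1 : 1 + 1 / (m:ℝ) ≤ Real.exp (1 / m) := by
    have := Real.add_one_le_exp (1 / (m:ℝ)); linarith
  have h2 : (1 + 1 / (m:ℝ)) ^ m ≤ Real.exp 1 := by
    calc (1 + 1 / (m:ℝ)) ^ m ≤ (Real.exp (1 / m)) ^ m :=
          pow_le_pow_left₀ (by positivity) h1 m
      _ = Real.exp ((m : ℝ) * (1 / m)) := (Real.exp_nat_mul _ m).symm
      _ = Real.exp 1 := by rw [mul_one_div, div_self (ne_of_gt hm0)]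
  have ha : ((m:ℝ) / (m + 1)) = (1 + 1 / (m:ℝ))⁻¹ := by
    field_simp
  rw [ha, inv_pow, one_div]
  exact inv_anti₀ (by positivity) h2


/-- Every `n`-uniform hypergraph with an even number of vertices and maximum
degree at most `2^(n-2)/(e·n)` has a proper halving 2-coloring: no hyperedge is
monochromatic and the two color classes have equal size. -/
theorem proper_halving_coloring {V : Type} [Fintype V] [DecidableEq V]
    (n : ℕ) (hn : 1 ≤ n) (E : Finset (Finset V))
    (hunif : ∀ e ∈ E, e.card = n) (heven : Even (Fintype.card V))
    (hdeg : ∀ v : V, ((E.filter fun e => v ∈ e).card : ℝ)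
      ≤ (2 : ℝ) ^ ((n : ℤ) - 2) / (Real.exp 1 * n)) :
    ∃ c : V → Bool,
      (∀ e ∈ E, ∃ v ∈ e, ∃ w ∈ e, c v ≠ c w) ∧
      (Finset.univ.filter fun v => c v = true).card
        = (Finset.univ.filter fun v => c v = false).card := by
  classical
  obtain ⟨k, hk⟩ := heven
  have hcard : Fintype.card V = Fintype.card (Fin k × Bool) := by
    simp only [Fintype.card_prod, Fintype.card_fin, Fintype.card_bool]
    omega
  set φ : V ≃ Fin k × Bool := Fintype.equivOfCardEq hcard with hφ
  have hbal : ∀ ω : Fin k → Bool,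
      ((univ.filter fun v : V => (decide (ω (φ v).1 = (φ v).2)) = true).card
        = (univ.filter fun v : V => (decide (ω (φ v).1 = (φ v).2)) = false).card) := by
    intro ω
    have h1 : ∀ b : Bool, (univ.filter fun v : V => (decide (ω (φ v).1 = (φ v).2)) = b).card
        = (univ.filter fun q : Fin k × Bool => (decide (ω q.1 = q.2)) = b).card :=
      fun b => filter_card_equiv φ (fun q : Fin k × Bool => (decide (ω q.1 = q.2)) = b)
    rw [h1 true, h1 false, balance_count k ω true, balance_count k ω false]
  by_cases hE : E = ∅
  · subst hE
    exact ⟨fun v => decide ((fun _ : Fin k => true) (φ v).1 = (φ v).2),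
      by simp, hbal (fun _ => true)⟩
  -- E nonempty
  obtain ⟨e₀, he₀⟩ := Finset.nonempty_iff_ne_empty.mpr hE
  have he₀ne : e₀.Nonempty := by
    rw [← Finset.card_pos, hunif e₀ he₀]; omega
  obtain ⟨v₀, hv₀⟩ := he₀ne
  have hVne : Nonempty V := ⟨v₀⟩
  set D : ℕ := univ.sup (fun v : V => (E.filter fun e => v ∈ e).card) with hD
  have hD1 : 1 ≤ D := by
    have h1 : 1 ≤ (E.filter fun e => v₀ ∈ e).card := by
      rw [Nat.one_le_iff_ne_zero, ← Nat.pos_iff_ne_zero, Finset.card_pos]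
      exact ⟨e₀, Finset.mem_filter.mpr ⟨he₀, hv₀⟩⟩
    rw [hD]
    exact le_trans h1 (Finset.le_sup (f := fun v : V => (E.filter fun e => v ∈ e).card) (Finset.mem_univ v₀))
  have hzpow : (2:ℝ) ^ ((n : ℤ) - 2) = 2 ^ n / 4 := by
    rw [zpow_sub₀ (by norm_num : (2:ℝ) ≠ 0), zpow_natCast]
    norm_num
  have hDle : (D : ℝ) ≤ (2 ^ n / 4) / (Real.exp 1 * n) := by
    obtain ⟨vm, -, hvm⟩ := Finset.exists_mem_eq_sup univ univ_nonempty
      (fun v : V => (E.filter fun e => v ∈ e).card)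
    rw [hD, hvm, ← hzpow]
    exact hdeg vm
  set M : ℕ := 2 * n * D with hM
  have hM2 : 2 ≤ M := by
    have h : 2 * (1 * 1) ≤ 2 * (n * D) :=
      Nat.mul_le_mul_left 2 (Nat.mul_le_mul hn hD1)
    rw [hM]
    calc 2 = 2 * (1 * 1) := by norm_num
      _ ≤ 2 * (n * D) := h
      _ = 2 * n * D := by ring
  set d : ℕ := M - 1 with hd
  have hdM : d + 1 = M := by omega
  have hd1 : 1 ≤ d := by omega
  set x : ℝ := 1 / (M : ℝ) with hx
  have hMR : (2:ℝ) ≤ (M:ℝ) := by exact_mod_cast hM2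
  have hx0 : 0 < x := by rw [hx]; positivity
  have hx1 : x < 1 := by
    rw [hx, div_lt_one (by linarith)]; linarith
  -- the probability space and events
  set A : {e : Finset V // e ∈ E} → Finset (Fin k → Bool) := fun f =>
    univ.filter fun ω => ∀ v ∈ f.1, ∀ w ∈ f.1,
      (decide (ω (φ v).1 = (φ v).2)) = (decide (ω (φ w).1 = (φ w).2)) with hA
  set Γ : {e : Finset V // e ∈ E} → Finset {e : Finset V // e ∈ E} := fun f =>
    univ.filter fun g => ((f.1.image fun v => (φ v).1) ∩ (g.1.image fun v => (φ v).1)).Nonempty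
    with hΓ
  have hNcard : (Fintype.card (Fin k → Bool)) = 2 ^ k := by
    simp [Fintype.card_fun]
  -- dependency degree bound
  have hdegD : ∀ w : V, (univ.filter fun f : {e : Finset V // e ∈ E} => w ∈ f.1).card ≤ D := by
    intro w
    have h1 : (univ.filter fun f : {e : Finset V // e ∈ E} => w ∈ f.1).card
        ≤ (E.filter fun e => w ∈ e).card := by
      apply Finset.card_le_card_of_injOn (fun f => f.1)
      · intro f hf
        simp only [Finset.mem_coe, Finset.mem_filter, Finset.mem_univ, true_and] at hf
        exact Finset.mem_filter.mpr ⟨f.2, hf⟩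
      · intro f _ g _ hfg
        exact Subtype.ext hfg
    rw [hD]
    exact le_trans h1 (Finset.le_sup (f := fun v : V => (E.filter fun e => v ∈ e).card)
      (Finset.mem_univ w))
  have hΓcard : ∀ i, ((Γ i).erase i).card ≤ d := by
    intro i
    obtain ⟨e, he⟩ := i
    have hecard : e.card = n := hunif e he
    have hene : e.Nonempty := by rw [← Finset.card_pos, hecard]; omega
    set W : Finset V := univ.filter (fun w : V => (φ w).1 ∈ e.image fun v => (φ v).1) with hW
    have hWcard : W.card ≤ 2 * n := by
      have h1 : W.card ≤ ((e.image fun v => (φ v).1) ×ˢ (univ : Finset Bool)).card := by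
        apply Finset.card_le_card_of_injOn (fun w => ((φ w).1, (φ w).2))
        · intro w hw
          rw [hW] at hw
          simp only [Finset.mem_coe, Finset.mem_filter, Finset.mem_univ, true_and] at hw
          exact Finset.mem_product.mpr ⟨hw, Finset.mem_univ _⟩
        · intro w _ w' _ hww
          rw [Prod.mk.injEq] at hww
          exact φ.injective (Prod.ext hww.1 hww.2)
      have h2 : ((e.image fun v => (φ v).1) ×ˢ (univ : Finset Bool)).card
          = (e.image fun v => (φ v).1).card * 2 := by
        rw [Finset.card_product, Finset.card_univ, Fintype.card_bool]
      have h3 : (e.image fun v => (φ v).1).card ≤ n := by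
        rw [← hecard]; exact Finset.card_image_le
      omega
    have hsub : Γ ⟨e, he⟩ ⊆ W.biUnion (fun w => univ.filter fun f : {e' : Finset V // e' ∈ E} => w ∈ f.1) := by
      intro f hf
      rw [hΓ] at hf
      simp only [Finset.mem_filter, Finset.mem_univ, true_and] at hf
      obtain ⟨p, hp⟩ := hf
      rw [Finset.mem_inter] at hp
      obtain ⟨hp1, hp2⟩ := hp
      obtain ⟨w, hw, hwp⟩ := Finset.mem_image.mp hp2
      refine Finset.mem_biUnion.mpr ⟨w, ?_, ?_⟩
      · rw [hW]
        simp only [Finset.mem_filter, Finset.mem_univ, true_and]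
        rw [hwp]; exact hp1
      · simp only [Finset.mem_filter, Finset.mem_univ, true_and]
        exact hw
    have hΓle : (Γ ⟨e, he⟩).card ≤ 2 * n * D := by
      calc (Γ ⟨e, he⟩).card ≤ (W.biUnion (fun w => univ.filter fun f : {e' : Finset V // e' ∈ E} => w ∈ f.1)).card :=
            Finset.card_le_card hsub
        _ ≤ ∑ w ∈ W, (univ.filter fun f : {e' : Finset V // e' ∈ E} => w ∈ f.1).card :=
            Finset.card_biUnion_le
        _ ≤ ∑ _w ∈ W, D := Finset.sum_le_sum (fun w _ => hdegD w)
        _ = W.card * D := by rw [Finset.sum_const, smul_eq_mul]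
        _ ≤ 2 * n * D := Nat.mul_le_mul_right D hWcard
    have hmem : (⟨e, he⟩ : {e' : Finset V // e' ∈ E}) ∈ Γ ⟨e, he⟩ := by
      rw [hΓ]
      simp only [Finset.mem_filter, Finset.mem_univ, true_and, Finset.inter_self]
      exact hene.image _
    rw [Finset.card_erase_of_mem hmem]
    rw [hM] at hd
    omega
  -- probability bound
  have hnat : ∀ i, (A i).card * 2 ^ n ≤ 2 ^ (k + 1) := by
    rintro ⟨e, he⟩
    have hecard : e.card = n := hunif e he
    have hene : e.Nonempty := by rw [← Finset.card_pos, hecard]; omega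
    obtain ⟨u₀, hu₀⟩ := hene
    by_cases hinj : Set.InjOn (fun v => (φ v).1) ↑e
    · have hT := card_forall_eq (fun v => (φ v).1) (fun v => (φ v).2) e hinj
      have hF := card_forall_eq (fun v => (φ v).1) (fun v => !(φ v).2) e hinj
      rw [hecard, hNcard] at hT hF
      beta_reduce at hT hF
      rw [Finset.filter_congr_decidable] at hT hF
      have hsub : A ⟨e, he⟩ ⊆
          (univ.filter fun ω : Fin k → Bool => ∀ v ∈ e, ω (φ v).1 = (φ v).2)
          ∪ (univ.filter fun ω : Fin k → Bool => ∀ v ∈ e, ω (φ v).1 = !(φ v).2) := by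
        intro ω hω
        rw [hA] at hω
        simp only [Finset.mem_filter, Finset.mem_univ, true_and] at hω
        rw [Finset.mem_union]
        cases h0 : decide (ω (φ u₀).1 = (φ u₀).2) with
        | true =>
          left
          simp only [Finset.mem_filter, Finset.mem_univ, true_and]
          intro v hv
          have hvv := hω v hv u₀ hu₀
          rw [h0] at hvv
          exact of_decide_eq_true hvv
        | false =>
          right
          simp only [Finset.mem_filter, Finset.mem_univ, true_and]
          intro v hv
          have hvv := hω v hv u₀ hu₀
          rw [h0] at hvv
          exact Bool.eq_not_iff.mpr (of_decide_eq_false hvv)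
      calc (A ⟨e, he⟩).card * 2 ^ n
          ≤ ((univ.filter fun ω : Fin k → Bool => ∀ v ∈ e, ω (φ v).1 = (φ v).2).card
            + (univ.filter fun ω : Fin k → Bool => ∀ v ∈ e, ω (φ v).1 = !(φ v).2).card)
              * 2 ^ n := by
            apply Nat.mul_le_mul_right
            exact le_trans (Finset.card_le_card hsub) (Finset.card_union_le _ _)
        _ = 2 ^ k + 2 ^ k := by
            rw [Nat.add_mul]
            rw [hT]
            rw [hF]
        _ ≤ 2 ^ (k + 1) := le_of_eq (by ring)
    · -- non injective : the event is empty
      rw [Set.InjOn] at hinj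
      push_neg at hinj
      obtain ⟨v, hv, w, hw, hvw, hne⟩ := hinj
      rw [Finset.mem_coe] at hv hw
      have hφne : φ v ≠ φ w := fun h => hne (φ.injective h)
      have hσ : (φ w).2 = !(φ v).2 := by
        have : (φ v).2 ≠ (φ w).2 := by
          intro h
          exact hφne (Prod.ext hvw h)
        cases h1 : (φ v).2 <;> cases h2 : (φ w).2 <;> simp_all
      have hempty : A ⟨e, he⟩ = ∅ := by
        rw [Finset.eq_empty_iff_forall_notMem]
        intro ω hω
        rw [hA] at hω
        simp only [Finset.mem_filter, Finset.mem_univ, true_and] at hω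
        have h3 := hω v hv w hw
        have hvw' : (φ v).1 = (φ w).1 := hvw
        rw [← hvw', hσ] at h3
        cases h4 : ω (φ v).1 <;> cases h5 : (φ v).2 <;> rw [h4, h5] at h3 <;> simp at h3
      rw [hempty]
      simp only [Finset.card_empty, Nat.zero_mul]
      exact Nat.zero_le _
  have hAbound : ∀ i, ((A i).card : ℝ) ≤ x * (1 - x) ^ d * Fintype.card (Fin k → Bool) := by
    intro i
    have h1 : ((A i).card : ℝ) * 2 ^ n ≤ 2 ^ (k + 1) := by exact_mod_cast hnat i
    have h2pos : (0:ℝ) < 2 ^ n := by positivity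
    have hcardA : ((A i).card : ℝ) ≤ 2 / 2 ^ n * 2 ^ k := by
      rw [div_mul_eq_mul_div, le_div_iff₀ h2pos]
      calc ((A i).card : ℝ) * 2 ^ n ≤ 2 ^ (k + 1) := h1
        _ = 2 * 2 ^ k := by ring
    have hEpos := Real.exp_pos 1
    have hnpos : (0:ℝ) < n := by exact_mod_cast hn
    have hDpos : (0:ℝ) ≤ (D:ℝ) := by positivity
    have hMreal : (M:ℝ) = 2 * n * D := by rw [hM]; push_cast; ring
    have hMe : 2 * (Real.exp 1 * M) ≤ 2 ^ n := by
      have h3 : (D:ℝ) * (Real.exp 1 * n) ≤ 2 ^ n / 4 := by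
        rw [← le_div_iff₀ (by positivity)]
        exact hDle
      rw [hMreal]
      nlinarith [h3]
    have hMpos : (0:ℝ) < (M:ℝ) := by linarith [hMR]
    have hstep2 : 2 / (2:ℝ) ^ n ≤ 1 / (Real.exp 1 * M) := by
      rw [div_le_div_iff₀ h2pos (by positivity)]
      linarith [hMe]
    have hdreal : ((d:ℝ) + 1) = (M:ℝ) := by exact_mod_cast hdM
    have hdpos : (0:ℝ) < (d:ℝ) + 1 := by linarith
    have hstep3 : 1 / (Real.exp 1 * M) ≤ x * (1 - x) ^ d := by
      have hxd : 1 - x = (d:ℝ) / ((d:ℝ) + 1) := by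
        rw [hx, ← hdreal]
        field_simp
        ring
      have hone := one_div_e_le d hd1
      rw [hxd, hx, ← hdreal]
      calc 1 / (Real.exp 1 * ((d:ℝ) + 1))
          = (1 / ((d:ℝ) + 1)) * (1 / Real.exp 1) := by
            rw [one_div_mul_one_div, mul_comm]
        _ ≤ (1 / ((d:ℝ) + 1)) * (((d:ℝ) / ((d:ℝ) + 1)) ^ d) := by
            apply mul_le_mul_of_nonneg_left hone (by positivity)
    have hN2 : ((Fintype.card (Fin k → Bool) : ℕ) : ℝ) = 2 ^ k := by
      rw [hNcard]; push_cast; ring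
    rw [hN2]
    calc ((A i).card : ℝ) ≤ 2 / 2 ^ n * 2 ^ k := hcardA
      _ ≤ (x * (1 - x) ^ d) * 2 ^ k := by
          apply mul_le_mul_of_nonneg_right (le_trans hstep2 hstep3) (by positivity)
      _ = x * (1 - x) ^ d * 2 ^ k := by ring
  -- independence
  have hindep : ∀ i, ∀ S : Finset {e : Finset V // e ∈ E}, (∀ j ∈ S, j ∉ Γ i) →
      (((A i ∩ Bset A S).card : ℝ)) * Fintype.card (Fin k → Bool)
        = (A i).card * (Bset A S).card := by
    rintro ⟨e, he⟩ S hS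
    set s : Finset (Fin k) := e.image (fun v => (φ v).1) with hs
    have hdisj : ∀ j ∈ S, ∀ v ∈ j.1, (φ v).1 ∉ s := by
      intro j hj v hv hps
      refine hS j hj ?_
      rw [hΓ]
      simp only [Finset.mem_filter, Finset.mem_univ, true_and]
      exact ⟨(φ v).1, Finset.mem_inter.mpr ⟨hps, Finset.mem_image_of_mem _ hv⟩⟩
    have hf : ∀ ω ω' : Fin k → Bool, (∀ p ∈ s, ω p = ω' p) →
        ((∀ v ∈ e, ∀ w ∈ e, (decide (ω (φ v).1 = (φ v).2)) = (decide (ω (φ w).1 = (φ w).2)))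
        ↔ (∀ v ∈ e, ∀ w ∈ e, (decide (ω' (φ v).1 = (φ v).2)) = (decide (ω' (φ w).1 = (φ w).2)))) := by
      intro ω ω' hagree
      have hc : ∀ v ∈ e, ω (φ v).1 = ω' (φ v).1 := by
        intro v hv
        exact hagree _ (by rw [hs]; exact Finset.mem_image_of_mem _ hv)
      constructor
      · intro h v hv w hw
        rw [← hc v hv, ← hc w hw]
        exact h v hv w hw
      · intro h v hv w hw
        rw [hc v hv, hc w hw]
        exact h v hv w hw
    have hg : ∀ ω ω' : Fin k → Bool, (∀ p ∉ s, ω p = ω' p) →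
        ((∀ j ∈ S, ω ∉ A j) ↔ (∀ j ∈ S, ω' ∉ A j)) := by
      intro ω ω' hagree
      have hAiff : ∀ j ∈ S, (ω ∈ A j ↔ ω' ∈ A j) := by
        intro j hj
        have hc : ∀ v ∈ j.1, ω (φ v).1 = ω' (φ v).1 := by
          intro v hv
          exact hagree _ (hdisj j hj v hv)
        rw [hA]
        simp only [Finset.mem_filter, Finset.mem_univ, true_and]
        constructor
        · intro h v hv w hw
          rw [← hc v hv, ← hc w hw]
          exact h v hv w hw
        · intro h v hv w hw
          rw [hc v hv, hc w hw]
          exact h v hv w hw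
      constructor
      · intro h j hj hj'
        exact h j hj ((hAiff j hj).mpr hj')
      · intro h j hj hj'
        exact h j hj ((hAiff j hj).mp hj')
    have key := indep_card (s := s)
      (f := fun ω : Fin k → Bool => ∀ v ∈ e, ∀ w ∈ e,
        (decide (ω (φ v).1 = (φ v).2)) = (decide (ω (φ w).1 = (φ w).2)))
      (g := fun ω : Fin k → Bool => ∀ j ∈ S, ω ∉ A j) hf hg
    have h1 : (univ.filter fun ω : Fin k → Bool => ∀ v ∈ e, ∀ w ∈ e,
        (decide (ω (φ v).1 = (φ v).2)) = (decide (ω (φ w).1 = (φ w).2))) = A ⟨e, he⟩ := by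
      rw [hA]
    have h2 : (univ.filter fun ω : Fin k → Bool => ∀ j ∈ S, ω ∉ A j) = Bset A S := rfl
    have h3 : (univ.filter fun ω : Fin k → Bool =>
        (∀ v ∈ e, ∀ w ∈ e, (decide (ω (φ v).1 = (φ v).2)) = (decide (ω (φ w).1 = (φ w).2)))
        ∧ ∀ j ∈ S, ω ∉ A j) = A ⟨e, he⟩ ∩ Bset A S := by
      rw [← h1, ← h2, ← Finset.filter_and]
    rw [h1, h2, h3] at key
    exact_mod_cast key
  obtain ⟨ω, hω⟩ := LLL_avoid A Γ d x hx0 hx1 hΓcard hAbound hindep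
  refine ⟨fun v => decide (ω (φ v).1 = (φ v).2), ?_, hbal ω⟩
  intro e he
  have h := hω ⟨e, he⟩
  rw [hA] at h
  simp only [Finset.mem_filter, Finset.mem_univ, true_and, not_forall] at h
  obtain ⟨v, hv, w, hw, hne⟩ := h
  exact ⟨v, hv, w, hw, hne⟩
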